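/- Let g > 1 be an integer and let G be the group with presentation ⟨A, B, C | A² = B^{2g+2} = C⁴ = ABC = (C⁻¹B)² = 1⟩. Then in G the element C²A equals CB⁻¹, and this element has order 2. -/

import Mathlib

/-- Relators of the Accola–Maclachlan group
⟨A, B, C | A² = B^{2g+2} = C⁴ = ABC = (C⁻¹B)² = 1⟩, with generators
A, B, C represented by `FreeGroup.of 0`, `FreeGroup.of 1`, `FreeGroup.of 2`. -/
def amRels (g : ℕ) : Set (FreeGroup (Fin 3)) :=
  {FreeGroup.of 0 ^ 2, FreeGroup.of 1 ^ (2 * g + 2), FreeGroup.of 2 ^ 4,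
   FreeGroup.of 0 * FreeGroup.of 1 * FreeGroup.of 2,
   ((FreeGroup.of 2)⁻¹ * FreeGroup.of 1) ^ 2}

lemma amRel_one (g : ℕ) {r : FreeGroup (Fin 3)} (hr : r ∈ amRels g) :
    (QuotientGroup.mk r : PresentedGroup (amRels g)) = 1 :=
  (QuotientGroup.eq_one_iff r).mpr (Subgroup.subset_normalClosure hr)

/-- the homomorphism to ZMod 2 killing C -/
def amf : Fin 3 → Multiplicative (ZMod 2) :=
  fun i => if i = 2 then 1 else Multiplicative.ofAdd 1

lemma amf_rels (g : ℕ) : ∀ r ∈ amRels g, FreeGroup.lift amf r = 1 := by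
  intro r hr
  have h2 : (Multiplicative.ofAdd (1 : ZMod 2)) ^ 2 = 1 := by decide
  rcases hr with h | h | h | h | h <;> subst h <;>
    simp [amf, FreeGroup.lift_apply_of]
  · exact h2
  · show (Multiplicative.ofAdd (1 : ZMod 2)) ^ (2 * g + 2) = 1
    have : 2 * g + 2 = 2 * (g + 1) := by ring
    rw [this, pow_mul, h2, one_pow]
  · show Multiplicative.ofAdd (1 : ZMod 2) * Multiplicative.ofAdd 1 * 1 = 1
    decide
  · show (1⁻¹ * Multiplicative.ofAdd (1 : ZMod 2)) ^ 2 = 1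
    simpa using h2

theorem stmt_6 (g : ℕ) (hg : 1 < g)
    (A B C : PresentedGroup (amRels g))
    (hA : A = PresentedGroup.of 0) (hB : B = PresentedGroup.of 1)
    (hC : C = PresentedGroup.of 2) :
    C ^ 2 * A = C * B⁻¹ ∧ orderOf (C ^ 2 * A) = 2 := by
  subst hA hB hC
  have hA2 : (PresentedGroup.of 0 : PresentedGroup (amRels g)) ^ 2 = 1 := by
    have := amRel_one g (r := FreeGroup.of 0 ^ 2) (by simp [amRels])
    simp only [PresentedGroup.of, ← map_pow, ← map_mul, ← map_inv]; exact this
  have hABC : (PresentedGroup.of 0 : PresentedGroup (amRels g)) *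
      PresentedGroup.of 1 * PresentedGroup.of 2 = 1 := by
    have := amRel_one g (r := FreeGroup.of 0 * FreeGroup.of 1 * FreeGroup.of 2)
      (by simp [amRels])
    simp only [PresentedGroup.of, ← map_pow, ← map_mul, ← map_inv]; exact this
  have hCB : ((PresentedGroup.of 2 : PresentedGroup (amRels g))⁻¹ *
      PresentedGroup.of 1) ^ 2 = 1 := by
    have := amRel_one g (r := ((FreeGroup.of 2)⁻¹ * FreeGroup.of 1) ^ 2)
      (by simp [amRels])
    simp only [PresentedGroup.of, ← map_pow, ← map_mul, ← map_inv]; exact this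
  set A := (PresentedGroup.of 0 : PresentedGroup (amRels g))
  set B := (PresentedGroup.of 1 : PresentedGroup (amRels g))
  set C := (PresentedGroup.of 2 : PresentedGroup (amRels g))
  have hAinv : A⁻¹ = A := by
    rw [inv_eq_iff_mul_eq_one, ← pow_two]; exact hA2
  have hCeq : C = B⁻¹ * A⁻¹ := by
    have h := eq_inv_of_mul_eq_one_right hABC
    rw [h, mul_inv_rev]
  have hCA : C * A = B⁻¹ := by
    rw [hCeq, hAinv, mul_assoc, ← pow_two, hA2, mul_one]
  have heq : C ^ 2 * A = C * B⁻¹ := by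
    rw [pow_two, mul_assoc, hCA]
  refine ⟨heq, ?_⟩
  rw [heq]
  have hBC : B⁻¹ * C = C⁻¹ * B := by
    have h := hCB
    rw [pow_two] at h
    have h2 := inv_eq_of_mul_eq_one_left h
    simpa [mul_inv_rev] using h2
  have hsq : (C * B⁻¹) ^ 2 = 1 := by
    rw [pow_two]
    calc C * B⁻¹ * (C * B⁻¹) = C * (B⁻¹ * C) * B⁻¹ := by simp [mul_assoc]
    _ = C * (C⁻¹ * B) * B⁻¹ := by rw [hBC]
    _ = 1 := by simp [mul_assoc]
  have hne : (C * B⁻¹) ≠ 1 := by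
    intro h
    have hφ : ∃ φ : PresentedGroup (amRels g) →* Multiplicative (ZMod 2),
        ∀ i, φ (PresentedGroup.of i) = amf i :=
      ⟨PresentedGroup.toGroup (amf_rels g), fun i => PresentedGroup.toGroup.of (amf_rels g)⟩
    obtain ⟨φ, hφ⟩ := hφ
    have : φ (C * B⁻¹) = Multiplicative.ofAdd (1 : ZMod 2) := by
      rw [map_mul, map_inv, hφ, hφ]
      decide
    rw [h, map_one] at this
    exact absurd this.symm (by decide)
  exact orderOf_eq_prime hsq hne
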